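/- Strong calibration for fixed n under group invariance: suppose the Bayes factor β_n is a function of a maximal invariant U_n and for all g ∈ G, dμ^{P_{1,g},U_n}/dμ^{P_{0,g},U_n}(U_n(x^n)) = β_n(x^n). Then for any G_n-measurable binary random variable V_n with P_{0,g}(V_n=1) > 0 and P_{1,g}(V_n=1) > 0, one can choose the Radon-Nikodym derivative so that (P_{1,g}(V_n=1)/P_{0,g}(V_n=1)) · (dμ^{P_{1,g},β_n | V_n=1}/dμ^{P_{0,g},β_n | V_n=1})(β_n(x^n)) = β_n(x^n) for all x^n. -/

import Mathlib

open MeasureTheory ProbabilityTheory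
open scoped ENNReal

/-- Strong calibration for fixed `n` under group invariance (Lemma 3): if the Bayes
factor `β` is, for every `g`, a version of the Radon–Nikodym derivative of the
pushforwards of the maximal invariant `U` (Berger–Dass–Varshavsky), then for every
binary `V` measurable w.r.t. the quotient σ-algebra (the σ-algebra generated by `U`)
with `P_{0,g}(V=1) > 0` and `P_{1,g}(V=1) > 0`, one can choose a version `f` of the
Radon–Nikodym derivative of the conditional pushforwards of `β` such that
`(P_{1,g}(V=1)/P_{0,g}(V=1)) · f(β x) = β x` for all `x`. -/
theorem strong_calibration_fixed_n
    {Y 𝒰 G : Type*} [MeasurableSpace Y] [MeasurableSpace 𝒰]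
    (P0 P1 : G → Measure Y)
    [∀ g, IsProbabilityMeasure (P0 g)] [∀ g, IsProbabilityMeasure (P1 g)]
    (U : Y → 𝒰) (hU : Measurable U)
    (β : Y → ℝ≥0∞) (hβ : Measurable β)
    (hBerger : ∀ g, ∃ h : 𝒰 → ℝ≥0∞, Measurable h ∧
      Measure.map U (P1 g) = (Measure.map U (P0 g)).withDensity h ∧
      ∀ y, h (U y) = β y)
    (V : Y → Bool)
    (hV : MeasurableSet[MeasurableSpace.comap U inferInstance] {y | V y = true}) :
    ∀ g, P0 g {y | V y = true} ≠ 0 → P1 g {y | V y = true} ≠ 0 →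
      ∃ f : ℝ≥0∞ → ℝ≥0∞, Measurable f ∧
        Measure.map β ((P1 g)[|{y | V y = true}]) =
          (Measure.map β ((P0 g)[|{y | V y = true}])).withDensity f ∧
        ∀ y, (P1 g {y' | V y' = true} / P0 g {y' | V y' = true}) * f (β y) = β y := by

  obtain ⟨S, hS, hSE⟩ := hV
  intro g h0 h1
  obtain ⟨h, hh, hmap, hhU⟩ := hBerger g
  set E : Set Y := {y | V y = true} with hEdef
  have hE : MeasurableSet E := hSE ▸ hU hS
  set c0 := P0 g E with hc0
  set c1 := P1 g E with hc1
  have hc0top : c0 ≠ ∞ := measure_ne_top _ _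
  have hc1top : c1 ≠ ∞ := measure_ne_top _ _
  -- key identity: P1 of U-preimages is the integral of β against P0
  have key : ∀ T : Set 𝒰, MeasurableSet T →
      P1 g (U ⁻¹' T) = ∫⁻ y in U ⁻¹' T, β y ∂(P0 g) := by
    intro T hT
    have h1' : P1 g (U ⁻¹' T) = Measure.map U (P1 g) T :=
      (Measure.map_apply hU hT).symm
    rw [h1', hmap, withDensity_apply _ hT, setLIntegral_map hT hh hU]
    exact setLIntegral_congr_fun (hU hT) (fun y _ => hhU y)
  -- β preimages intersected with E are U-preimages
  have hβpre : ∀ A : Set ℝ≥0∞, E ∩ β ⁻¹' A = U ⁻¹' (S ∩ h ⁻¹' A) := by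
    intro A
    rw [Set.preimage_inter, hSE]
    congr 1
    ext y
    simp [hhU y]
  have hfm : Measurable fun t : ℝ≥0∞ => c0 / c1 * t := by fun_prop
  refine ⟨fun t => c0 / c1 * t, hfm, ?_, ?_⟩
  · ext A hA
    rw [Measure.map_apply hβ hA, cond_apply hE, withDensity_apply _ hA,
      setLIntegral_map hA hfm hβ]
    have hAβ : MeasurableSet (β ⁻¹' A) := hβ hA
    have hTm : MeasurableSet (S ∩ h ⁻¹' A) := hS.inter (hh hA)
    rw [hβpre A, key _ hTm, ← hβpre A]
    -- RHS: integral over conditional measure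
    have : (∫⁻ y in β ⁻¹' A, c0 / c1 * β y ∂((P0 g)[|E])) =
        c0 / c1 * (c0⁻¹ * ∫⁻ y in E ∩ β ⁻¹' A, β y ∂(P0 g)) := by
      rw [lintegral_const_mul _ hβ]
      congr 1
      rw [ProbabilityTheory.cond, Measure.restrict_smul, lintegral_smul_measure,
        Measure.restrict_restrict hAβ, Set.inter_comm]
      rfl
    rw [this, ← mul_assoc]
    congr 1
    rw [div_eq_mul_inv, mul_comm c0 c1⁻¹, mul_assoc, ENNReal.mul_inv_cancel h0 hc0top,
      mul_one]
  · intro y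
    rw [← mul_assoc]
    have : c1 / c0 * (c0 / c1) = 1 := by
      rw [div_eq_mul_inv, div_eq_mul_inv, mul_assoc, ← mul_assoc c0⁻¹,
        ENNReal.inv_mul_cancel h0 hc0top, one_mul, ENNReal.mul_inv_cancel h1 hc1top]
    rw [this, one_mul]
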